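/- Let m ≥ 2 be an integer, let (X,d) be a metric space, μ a Borel measure on X, f:X→[0,∞) μ-measurable, and let x∈X and R>0. Let c>0 and δ∈(0,ω_m) be constants satisfying m·δ + δ^{(2m−3)/(m−1)} ≤ c^{−1}·δ^{(m−1)/m}. Assume: (i) r ↦ V(x,r) is continuous and positive on (0,R]; (ii) V(x,r)/r^m → ω_m as r→0⁺; and (iii) for every r∈(0,R], V(x,r)^{(m−1)/m} ≤ c·( D⁺V(x,·)(r) + ∫_{B(x,r)} f dμ ). Then at least one of the following holds: (1) the maximal function satisfies M_f(x,R) ≥ δ; (2) the volume ratio satisfies κ(x,R) > δ. (This is a metric-measure formulation of the paper's Lemma 2.1, where f = |H| and hypothesis (iii) encodes the Hoffman–Spruck Sobolev inequality applied to distance-function cutoffs, with c = c(m,α).) -/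

import Mathlib

open MeasureTheory Filter Set

/-- The volume `ω_m` of the unit ball in `ℝ^m`. -/
noncomputable def unitBallVolume (m : ℕ) : ℝ :=
  (volume (Metric.ball (0 : EuclideanSpace ℝ (Fin m)) 1)).toReal

private lemma key_alg (m : ℕ) (hm : 2 ≤ m) (c δ w V : ℝ) (hc : 0 < c) (hδ : 0 < δ)
    (hw : 0 < w) (hV : δ * w ^ m ≤ V)
    (hδc : (m : ℝ) * δ + δ ^ ((2 * (m : ℝ) - 3) / ((m : ℝ) - 1)) ≤
      c⁻¹ * δ ^ (((m : ℝ) - 1) / (m : ℝ))) :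
    (m : ℝ) * δ * w ^ (m - 1) +
      δ * w ^ ((1 : ℝ) / ((m : ℝ) - 1)) * V ^ (((m : ℝ) - 2) / ((m : ℝ) - 1)) ≤
      c⁻¹ * V ^ (((m : ℝ) - 1) / (m : ℝ)) := by
  have hm2 : (2 : ℝ) ≤ (m : ℝ) := by exact_mod_cast hm
  have hmpos : (0 : ℝ) < m := by linarith
  have hm1pos : (0 : ℝ) < (m : ℝ) - 1 := by linarith
  have hwm : (0 : ℝ) < w ^ m := pow_pos hw m
  have hVpos : 0 < V := lt_of_lt_of_le (by positivity) hV
  set t : ℝ := V / (δ * w ^ m) with ht_def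
  have hδw : (0:ℝ) < δ * w ^ m := by positivity
  have ht1 : 1 ≤ t := (one_le_div hδw).2 hV
  have htpos : 0 < t := lt_of_lt_of_le one_pos ht1
  have hVeq : V = t * (δ * w ^ m) := by rw [ht_def, div_mul_cancel₀ _ hδw.ne']
  set p : ℝ := ((m : ℝ) - 1) / (m : ℝ) with hp_def
  set q : ℝ := ((m : ℝ) - 2) / ((m : ℝ) - 1) with hq_def
  have hppos : 0 ≤ p := by positivity
  have hqnn : 0 ≤ q := div_nonneg (by linarith) hm1pos.le
  have hqp : q ≤ p := by
    rw [hp_def, hq_def, div_le_div_iff₀ hm1pos hmpos]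
    nlinarith
  have hVp : V ^ p = t ^ p * (δ ^ p * w ^ ((m:ℝ) - 1)) := by
    rw [hVeq, Real.mul_rpow (le_of_lt htpos) hδw.le, Real.mul_rpow hδ.le hwm.le,
      ← Real.rpow_natCast w m, ← Real.rpow_mul hw.le]
    have h : (m : ℝ) * p = (m : ℝ) - 1 := by rw [hp_def]; field_simp
    rw [h]
  have hVq : V ^ q = t ^ q * (δ ^ q * w ^ ((m:ℝ) * q)) := by
    rw [hVeq, Real.mul_rpow (le_of_lt htpos) hδw.le, Real.mul_rpow hδ.le hwm.le,
      ← Real.rpow_natCast w m, ← Real.rpow_mul hw.le]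
  have hwexp : w ^ ((1 : ℝ) / ((m : ℝ) - 1)) * w ^ ((m:ℝ) * q) = w ^ ((m:ℝ) - 1) := by
    rw [← Real.rpow_add hw, hq_def]
    congr 1
    field_simp
    ring
  have hδq : δ * δ ^ q = δ ^ ((2 * (m : ℝ) - 3) / ((m : ℝ) - 1)) := by
    nth_rewrite 1 [← Real.rpow_one δ]
    rw [← Real.rpow_add hδ, hq_def]
    congr 1
    field_simp
    ring
  have hwm1 : (w : ℝ) ^ (m - 1) = w ^ ((m:ℝ) - 1) := by
    rw [← Real.rpow_natCast w (m - 1)]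
    congr 1
    have h1 : 1 ≤ m := by omega
    push_cast [Nat.cast_sub h1]
    ring
  rw [hVp, hVq, hwm1]
  have htq : t ^ q ≤ t ^ p := Real.rpow_le_rpow_of_exponent_le ht1 hqp
  have htp1 : 1 ≤ t ^ p := Real.one_le_rpow ht1 hppos
  have hwm1pos : (0:ℝ) < w ^ ((m:ℝ) - 1) := Real.rpow_pos_of_pos hw _
  have key : ((m:ℝ) * δ + (δ * δ ^ q) * t ^ q) ≤ c⁻¹ * δ ^ p * t ^ p := by
    rw [hδq]
    have hδ' : (0:ℝ) ≤ δ ^ ((2 * (m : ℝ) - 3) / ((m : ℝ) - 1)) := (Real.rpow_pos_of_pos hδ _).le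
    have hmδ : (0:ℝ) ≤ (m:ℝ) * δ := by positivity
    have h1 : ((m:ℝ) * δ + δ ^ ((2 * (m : ℝ) - 3) / ((m : ℝ) - 1))) * t ^ p ≤
        (c⁻¹ * δ ^ p) * t ^ p :=
      mul_le_mul_of_nonneg_right hδc (le_trans zero_le_one htp1)
    nlinarith [mul_le_mul_of_nonneg_left htp1 hmδ, mul_le_mul_of_nonneg_left htq hδ']
  calc (m:ℝ) * δ * w ^ ((m:ℝ)-1) + δ * w ^ ((1:ℝ)/((m:ℝ)-1)) * (t ^ q * (δ ^ q * w ^ ((m:ℝ)*q)))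
      = ((m:ℝ) * δ + (δ * δ ^ q) * t ^ q) * w ^ ((m:ℝ)-1) := by
        rw [← hwexp]; ring
    _ ≤ (c⁻¹ * δ ^ p * t ^ p) * w ^ ((m:ℝ)-1) :=
        mul_le_mul_of_nonneg_right key hwm1pos.le
    _ = c⁻¹ * (t ^ p * (δ ^ p * w ^ ((m:ℝ)-1))) := by ring

theorem maximal_function_or_volume_ratio
    {X : Type*} [MetricSpace X] [MeasurableSpace X] [BorelSpace X]
    (μ : Measure X)
    (m : ℕ) (hm : 2 ≤ m)
    (f : X → ℝ) (hf0 : ∀ x, 0 ≤ f x) (hfmeas : Measurable f)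
    (x : X) (R : ℝ) (hR : 0 < R)
    (c δ : ℝ) (hc : 0 < c) (hδ0 : 0 < δ) (hδω : δ < unitBallVolume m)
    (hδc : (m : ℝ) * δ + δ ^ ((2 * (m : ℝ) - 3) / ((m : ℝ) - 1)) ≤
      c⁻¹ * δ ^ (((m : ℝ) - 1) / (m : ℝ)))
    (hVcont : ContinuousOn (fun r : ℝ => (μ (Metric.ball x r)).toReal) (Set.Ioc 0 R))
    (hVpos : ∀ r ∈ Set.Ioc (0 : ℝ) R, 0 < (μ (Metric.ball x r)).toReal)
    (hVlim : Tendsto (fun r : ℝ => (μ (Metric.ball x r)).toReal / r ^ m)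
      (nhdsWithin 0 (Set.Ioi 0)) (nhds (unitBallVolume m)))
    (hSob : ∀ r ∈ Set.Ioc (0 : ℝ) R,
      (μ (Metric.ball x r)).toReal ^ (((m : ℝ) - 1) / (m : ℝ)) ≤
        c * (Filter.liminf
              (fun s : ℝ =>
                ((μ (Metric.ball x (r + s))).toReal - (μ (Metric.ball x r)).toReal) / s)
              (nhdsWithin 0 (Set.Ioi 0))
            + ∫ y in Metric.ball x r, f y ∂μ)) :
    (∃ r ∈ Set.Ioc (0 : ℝ) R,
        δ ≤ r ^ (-(1 / ((m : ℝ) - 1))) *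
          (μ (Metric.ball x r)).toReal ^ (-(((m : ℝ) - 2) / ((m : ℝ) - 1))) *
          ∫ y in Metric.ball x r, f y ∂μ) ∨
      δ < sInf {v : ℝ | ∃ r ∈ Set.Ioc (0 : ℝ) R,
        v = (μ (Metric.ball x r)).toReal / r ^ m} := by
  classical
  by_cases h1 : ∃ r ∈ Set.Ioc (0 : ℝ) R,
      δ ≤ r ^ (-(1 / ((m : ℝ) - 1))) *
        (μ (Metric.ball x r)).toReal ^ (-(((m : ℝ) - 2) / ((m : ℝ) - 1))) *
        ∫ y in Metric.ball x r, f y ∂μ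
  · exact Or.inl h1
  right
  push_neg at h1
  set V : ℝ → ℝ := fun r => (μ (Metric.ball x r)).toReal with hVdef
  have hm2 : (2 : ℝ) ≤ (m : ℝ) := by exact_mod_cast hm
  have hm1pos : (0 : ℝ) < (m : ℝ) - 1 := by linarith
  -- finiteness and monotonicity
  have hRfin : μ (Metric.ball x R) ≠ ⊤ := by
    intro h
    have h2 := hVpos R ⟨hR, le_refl R⟩
    rw [h] at h2
    simp at h2
  have hVmono : ∀ a b : ℝ, a ≤ b → b ≤ R → V a ≤ V b := fun a b hab hbR =>
    ENNReal.toReal_mono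
      (ne_top_of_le_ne_top hRfin (measure_mono (Metric.ball_subset_ball hbR)))
      (measure_mono (Metric.ball_subset_ball hab))
  -- the integral bound from failure of the maximal-function alternative
  have hInt : ∀ r ∈ Set.Ioc (0:ℝ) R,
      (∫ y in Metric.ball x r, f y ∂μ) <
        δ * r ^ ((1:ℝ)/((m:ℝ)-1)) * (V r) ^ (((m:ℝ)-2)/((m:ℝ)-1)) := by
    intro r hr
    have h2 := h1 r hr
    rw [Real.rpow_neg hr.1.le, Real.rpow_neg (hVpos r hr).le] at h2
    set a := r ^ ((1:ℝ)/((m:ℝ)-1)) with ha_def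
    set b := (V r) ^ (((m:ℝ)-2)/((m:ℝ)-1)) with hb_def
    have hapos : 0 < a := Real.rpow_pos_of_pos hr.1 _
    have hbpos : 0 < b := Real.rpow_pos_of_pos (hVpos r hr) _
    have h3 := mul_lt_mul_of_pos_left h2 (mul_pos hapos hbpos)
    calc (∫ y in Metric.ball x r, f y ∂μ)
        = a * b * (a⁻¹ * b⁻¹ * ∫ y in Metric.ball x r, f y ∂μ) := by
          field_simp
    _ < a * b * δ := h3
    _ = δ * a * b := by ring
  -- threshold radius from the volume-ratio limit
  set δ₂ : ℝ := (δ + unitBallVolume m) / 2 with hδ₂def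
  have hδδ₂ : δ < δ₂ := by rw [hδ₂def]; linarith
  have hδ₂ω : δ₂ < unitBallVolume m := by rw [hδ₂def]; linarith
  have hev : ∀ᶠ r in nhdsWithin (0:ℝ) (Set.Ioi 0), δ₂ < V r / r ^ m :=
    hVlim.eventually (eventually_gt_nhds hδ₂ω)
  obtain ⟨u, hu, husub⟩ := mem_nhdsGT_iff_exists_Ioc_subset.1 hev
  set ε : ℝ := min u R with hεdef
  have hε0 : 0 < ε := lt_min hu hR
  have hεR : ε ≤ R := min_le_right u R
  have hψsmall : ∀ r : ℝ, 0 < r → r ≤ ε → δ₂ < V r / r ^ m := fun r h0 hle =>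
    husub ⟨h0, le_trans hle (min_le_left u R)⟩
  have hVsmall : ∀ r : ℝ, 0 < r → r ≤ ε → δ * r ^ m < V r := by
    intro r h0 hle
    have h2 := hψsmall r h0 hle
    have hrm := pow_pos h0 m
    rw [lt_div_iff₀ hrm] at h2
    nlinarith
  have hIccsub : Set.Icc ε R ⊆ Set.Ioc 0 R := fun r hr =>
    ⟨lt_of_lt_of_le hε0 hr.1, hr.2⟩
  -- main claim: the volume ratio exceeds δ everywhere
  have hT : ∀ r ∈ Set.Ioc (0:ℝ) R, δ * r ^ m < V r := by
    by_contra hcon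
    push_neg at hcon
    obtain ⟨r₂, hr₂mem, hr₂le⟩ := hcon
    set T : Set ℝ := {r | r ∈ Set.Ioc (0:ℝ) R ∧ V r ≤ δ * r ^ m} with hTdef
    have hTr₂ : r₂ ∈ T := ⟨hr₂mem, hr₂le⟩
    have hTlb : ∀ r ∈ T, ε ≤ r := by
      intro r hrT
      by_contra hlt
      push_neg at hlt
      exact absurd hrT.2 (not_le.2 (hVsmall r hrT.1.1 hlt.le))
    have hTbdd : BddBelow T := ⟨ε, hTlb⟩
    set r₁ : ℝ := sInf T with hr₁def
    have hr₁mem : r₁ ∈ Set.Icc ε R ∧ V r₁ ≤ δ * r₁ ^ m := by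
      have hgc : ContinuousOn (fun r => V r - δ * r ^ m) (Set.Icc ε R) :=
        (hVcont.mono hIccsub).sub ((continuous_const.mul (continuous_pow m)).continuousOn)
      have hclosed : IsClosed (Set.Icc ε R ∩ (fun r => V r - δ * r ^ m) ⁻¹' Set.Iic 0) :=
        hgc.preimage_isClosed_of_isClosed isClosed_Icc isClosed_Iic
      have hsub2 : T ⊆ Set.Icc ε R ∩ (fun r => V r - δ * r ^ m) ⁻¹' Set.Iic 0 := by
        intro r hrT
        refine ⟨⟨hTlb r hrT, hrT.1.2⟩, ?_⟩
        simp only [Set.mem_preimage, Set.mem_Iic, sub_nonpos]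
        exact hrT.2
      have hmemc : r₁ ∈ closure T := csInf_mem_closure ⟨r₂, hTr₂⟩ hTbdd
      have := hclosed.closure_subset ((closure_mono hsub2) hmemc)
      refine ⟨this.1, ?_⟩
      have h3 := this.2
      simp only [Set.mem_preimage, Set.mem_Iic, sub_nonpos] at h3
      exact h3
    have hεr₁ : ε < r₁ := by
      rcases lt_or_eq_of_le hr₁mem.1.1 with h | h
      · exact h
      · exfalso
        have h2 := hVsmall ε hε0 le_rfl
        rw [h] at h2
        exact absurd hr₁mem.2 (not_le.2 h2)
    have hr₁R : r₁ ≤ R := hr₁mem.1.2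
    have hnotT : ∀ w : ℝ, ε ≤ w → w < r₁ → δ * w ^ m < V w := by
      intro w hw1 hw2
      have hwmem : w ∈ Set.Ioc (0:ℝ) R :=
        ⟨lt_of_lt_of_le hε0 hw1, le_trans hw2.le hr₁R⟩
      have hwT : w ∉ T := notMem_of_lt_csInf hw2 hTbdd
      by_contra hle
      push_neg at hle
      exact hwT ⟨hwmem, hle⟩
    set C : ℝ := V ε - δ * ε ^ m with hCdef
    have hC : 0 < C := sub_pos.2 (hnotT ε le_rfl hεr₁)
    -- apply the fencing theorem to -V on [ε, r₁]
    have hfc : ContinuousOn (fun w => -(V w)) (Set.Icc ε r₁) :=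
      (hVcont.mono (fun r hr => ⟨lt_of_lt_of_le hε0 hr.1, le_trans hr.2 hr₁R⟩)).neg
    have hBd : ∀ w : ℝ, HasDerivAt (fun y : ℝ => -(δ * y ^ m) - C)
        (-(δ * ((m:ℝ) * w ^ (m-1)))) w := fun w =>
      (((hasDerivAt_pow m w).const_mul δ).neg).sub_const C
    have hBcont : ContinuousOn (fun y : ℝ => -(δ * y ^ m) - C) (Set.Icc ε r₁) :=
      (((continuous_const.mul (continuous_pow m)).neg).sub continuous_const).continuousOn
    have hab : (fun w => -(V w)) ε ≤ (fun y : ℝ => -(δ * y ^ m) - C) ε := by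
      simp only
      rw [hCdef]
      ring_nf
      exact le_refl _
    have hbound : ∀ w ∈ Set.Ico ε r₁, ∀ ρ : ℝ,
        (-(δ * ((m:ℝ) * w ^ (m-1)))) < ρ →
        ∃ᶠ z in nhdsWithin w (Set.Ioi w), slope (fun y => -(V y)) w z < ρ := by
      intro w hw ρ hρ
      by_contra hfreq
      rw [Filter.not_frequently] at hfreq
      have hw0 : 0 < w := lt_of_lt_of_le hε0 hw.1
      have hwR : w < R := lt_of_lt_of_le hw.2 hr₁R
      have hwmem : w ∈ Set.Ioc (0:ℝ) R := ⟨hw0, hwR.le⟩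
      have hVw : δ * w ^ m < V w := hnotT w hw.1 hw.2
      have htend : Tendsto (fun s : ℝ => w + s) (nhdsWithin 0 (Set.Ioi 0))
          (nhdsWithin w (Set.Ioi w)) := by
        rw [tendsto_nhdsWithin_iff]
        constructor
        · have h2 : Tendsto (fun s : ℝ => w + s) (nhds 0) (nhds (w + 0)) :=
            (continuous_add_left w).tendsto 0
          rw [add_zero] at h2
          exact h2.mono_left nhdsWithin_le_nhds
        · filter_upwards [self_mem_nhdsWithin] with s hs
          exact lt_add_of_pos_right w hs
      have hev2 : ∀ᶠ s in nhdsWithin (0:ℝ) (Set.Ioi 0), (V (w+s) - V w)/s ≤ -ρ := by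
        filter_upwards [htend.eventually hfreq] with s hs
        rw [not_lt] at hs
        have heq : slope (fun y => -(V y)) w (w+s) = -((V (w+s) - V w)/s) := by
          rw [slope_def_field]
          rw [show w + s - w = s by ring]
          rw [← neg_div]
          ring_nf
        rw [heq] at hs
        linarith
      have hnn : ∀ᶠ s in nhdsWithin (0:ℝ) (Set.Ioi 0), 0 ≤ (V (w+s) - V w)/s := by
        filter_upwards [Ioo_mem_nhdsGT_of_mem
          (⟨le_refl (0:ℝ), sub_pos.2 hwR⟩ : (0:ℝ) ∈ Set.Ico (0:ℝ) (R - w))] with s hs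
        have h2 : V w ≤ V (w+s) := hVmono w (w+s) (by linarith [hs.1]) (by linarith [hs.2])
        exact div_nonneg (by linarith) hs.1.le
      have hliminf : Filter.liminf (fun s => (V (w+s) - V w)/s)
          (nhdsWithin (0:ℝ) (Set.Ioi 0)) ≤ -ρ := by
        rw [Filter.liminf_eq]
        refine csSup_le ⟨(0:ℝ), hnn⟩ fun a ha => ?_
        have ha' : ∀ᶠ s in nhdsWithin (0:ℝ) (Set.Ioi 0), a ≤ (V (w+s) - V w)/s := ha
        obtain ⟨s, hs1, hs2⟩ := (ha'.and hev2).exists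
        linarith
      have hs := hSob w hwmem
      have hIw := hInt w hwmem
      have hcle : (V w) ^ (((m:ℝ)-1)/(m:ℝ)) ≤
          c * (-ρ + ∫ y in Metric.ball x w, f y ∂μ) := by
        refine le_trans hs ?_
        apply mul_le_mul_of_nonneg_left _ hc.le
        exact add_le_add_left hliminf _
      have hcinv : c⁻¹ * (V w) ^ (((m:ℝ)-1)/(m:ℝ)) ≤
          -ρ + ∫ y in Metric.ball x w, f y ∂μ := by
        rw [inv_mul_le_iff₀ hc]
        exact hcle
      have hkey := key_alg m hm c δ w (V w) hc hδ0 hw0 hVw.le hδc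
      have hre : (m:ℝ) * δ * w ^ (m-1) = δ * ((m:ℝ) * w ^ (m-1)) := by ring
      linarith
    have hfinal := image_le_of_liminf_slope_right_le_deriv_boundary hfc hab hBcont
      (fun w _ => (hBd w).hasDerivWithinAt) hbound
      (right_mem_Icc.2 hεr₁.le)
    have h4 := hr₁mem.2
    nlinarith [hfinal]
  -- conclude: the infimum of the volume ratio exceeds δ
  have hψcont : ContinuousOn (fun r => V r / r ^ m) (Set.Icc ε R) :=
    (hVcont.mono hIccsub).div (continuous_pow m).continuousOn
      (fun r hr => pow_ne_zero m (ne_of_gt (lt_of_lt_of_le hε0 hr.1)))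
  obtain ⟨r₀, hr₀mem, hr₀min⟩ :=
    isCompact_Icc.exists_isMinOn ⟨R, right_mem_Icc.2 hεR⟩ hψcont
  have hr₀Ioc : r₀ ∈ Set.Ioc (0:ℝ) R := hIccsub hr₀mem
  have hδr₀ : δ < V r₀ / r₀ ^ m := by
    have h := hT r₀ hr₀Ioc
    rw [lt_div_iff₀ (pow_pos hr₀Ioc.1 m)]
    linarith
  show δ < sInf {v : ℝ | ∃ r ∈ Set.Ioc (0 : ℝ) R, v = V r / r ^ m}
  have hne : {v : ℝ | ∃ r ∈ Set.Ioc (0 : ℝ) R, v = V r / r ^ m}.Nonempty :=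
    ⟨V R / R ^ m, R, ⟨hR, le_refl R⟩, rfl⟩
  have hlb : ∀ v ∈ {v : ℝ | ∃ r ∈ Set.Ioc (0 : ℝ) R, v = V r / r ^ m},
      min δ₂ (V r₀ / r₀ ^ m) ≤ v := by
    rintro v ⟨r, hr, rfl⟩
    rcases le_or_gt r ε with hle | hlt
    · exact le_trans (min_le_left _ _) (hψsmall r hr.1 hle).le
    · exact le_trans (min_le_right _ _) (isMinOn_iff.1 hr₀min r ⟨hlt.le, hr.2⟩)
  calc δ < min δ₂ (V r₀ / r₀ ^ m) := lt_min hδδ₂ hδr₀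
    _ ≤ sInf {v : ℝ | ∃ r ∈ Set.Ioc (0 : ℝ) R, v = V r / r ^ m} := le_csInf hne hlb
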